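/- arXiv:2510.19120 — 2 statements merged into one kernel-verified Lean document; each statement's English description precedes it below -/
import Mathlib

section
/- Let ρ,τ ∈ ℕ⁺, let G be a finite simple graph and let P = x_0–x_1–⋯–x_{τ^ρ} be a path of length τ^ρ that is a (not necessarily induced) subgraph of G. Then one of the following holds: (a) there exists i_0 ∈ {0,…,τ^ρ} such that x_{i_0} is adjacent in G to at least τ of the vertices x_i with i_0+1 ≤ i ≤ τ^ρ; or (b) there are indices j_0,j_1,…,j_ρ with 0 = j_0 < j_1 < ⋯ < j_ρ ≤ τ^ρ such that the only edges of G among the vertices {x_{j_0},x_{j_1},…,x_{j_ρ}} are x_{j_{k−1}}x_{j_k} for 1 ≤ k ≤ ρ; in other words, x_0–x_{j_1}–⋯–x_{j_ρ} is an induced path in G. -/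
/-- The induced subgraph of `G` on `S` is nonempty and connected, expressed via
walks of `G` staying inside `S`. -/
def ConnectedIn {V : Type*} (G : SimpleGraph V) (S : Set V) : Prop :=
  S.Nonempty ∧ ∀ a ∈ S, ∀ b ∈ S, ∃ w : G.Walk a b, ∀ v ∈ w.support, v ∈ S

/-- An induced `H`-model in `G`: pairwise disjoint nonempty connected branch sets,
joined by an edge iff the corresponding vertices of `H` are adjacent. -/
def IsInducedModel {W V : Type*} (H : SimpleGraph W) (G : SimpleGraph V) (X : W → Set V) : Prop :=
  (∀ w, ConnectedIn G (X w)) ∧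
  (∀ w w', w ≠ w' → Disjoint (X w) (X w')) ∧
  (∀ w w', H.Adj w w' → ∃ a ∈ X w, ∃ b ∈ X w', G.Adj a b) ∧
  (∀ w w', w ≠ w' → ¬ H.Adj w w' → ∀ a ∈ X w, ∀ b ∈ X w', ¬ G.Adj a b)

/-- `G` has an induced minor isomorphic to `H`. -/
def InducedMinor {W V : Type*} (H : SimpleGraph W) (G : SimpleGraph V) : Prop :=
  ∃ X : W → Set V, IsInducedModel H G X

/-- An `H`-model in `G` (for the minor relation). -/
def IsMinorModel {W V : Type*} (H : SimpleGraph W) (G : SimpleGraph V) (X : W → Set V) : Prop :=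
  (∀ w, ConnectedIn G (X w)) ∧
  (∀ w w', w ≠ w' → Disjoint (X w) (X w')) ∧
  (∀ w w', H.Adj w w' → ∃ a ∈ X w, ∃ b ∈ X w', G.Adj a b)

/-- `G` has a minor isomorphic to `H`. -/
def HasMinor {W V : Type*} (H : SimpleGraph W) (G : SimpleGraph V) : Prop :=
  ∃ X : W → Set V, IsMinorModel H G X

/-- `(T, β)` is a tree decomposition of `G`. -/
structure IsTreeDecomp {V ι : Type*} (G : SimpleGraph V) (T : SimpleGraph ι)
    (β : ι → Finset V) : Prop where
  tree : T.IsTree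
  bags_connected : ∀ v : V, ConnectedIn T {i | v ∈ β i}
  edges_covered : ∀ u v : V, G.Adj u v → ∃ i, u ∈ β i ∧ v ∈ β i

/-- `G` has a tree decomposition of width at most `w`. -/
def TreewidthLE {V : Type*} (G : SimpleGraph V) (w : ℕ) : Prop :=
  ∃ (n : ℕ) (T : SimpleGraph (Fin n)) (β : Fin n → Finset V),
    IsTreeDecomp G T β ∧ ∀ i, (β i).card ≤ w + 1

noncomputable def treewidth {V : Type*} (G : SimpleGraph V) : ℕ :=
  sInf {w | TreewidthLE G w}

/-- `G` has a path decomposition of width at most `w`. -/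
def PathwidthLE {V : Type*} (G : SimpleGraph V) (w : ℕ) : Prop :=
  ∃ (n : ℕ) (β : Fin n → Finset V),
    IsTreeDecomp G (SimpleGraph.pathGraph n) β ∧ ∀ i, (β i).card ≤ w + 1

noncomputable def pathwidth {V : Type*} (G : SimpleGraph V) : ℕ :=
  sInf {w | PathwidthLE G w}

/-- A hereditary class of finite graphs (each finite graph is represented, up to
isomorphism, on some `Fin n`): the class is closed under induced subgraphs,
i.e. under pulling back along injections. -/
def Hereditary (𝒢 : ∀ n : ℕ, SimpleGraph (Fin n) → Prop) : Prop :=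
  ∀ (n m : ℕ) (G : SimpleGraph (Fin n)) (f : Fin m ↪ Fin n),
    𝒢 n G → 𝒢 m (G.comap ⇑f)

/-- A graph `J` is `ζ`-jagged if every induced subgraph with pathwidth at least 3
has at least `ζ` vertices of degree two (in that induced subgraph). -/
def Jagged {V : Type*} (ζ : ℕ) (J : SimpleGraph V) : Prop :=
  ∀ s : Set V, 3 ≤ pathwidth (J.induce s) →
    ζ ≤ {v | v ∈ s ∧ ({w | w ∈ s ∧ J.Adj v w}).ncard = 2}.ncard

/-- A graph is `d`-degenerate if every nonempty induced subgraph has a vertex of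
degree at most `d`. -/
def Degenerate {V : Type*} (d : ℕ) (G : SimpleGraph V) : Prop :=
  ∀ s : Set V, s.Nonempty → ∃ v ∈ s, ({w | w ∈ s ∧ G.Adj v w}).ncard ≤ d

/-- The complete binary tree of radius `ρ`: vertices are binary strings of length
at most `ρ`, and `x` is adjacent to `b :: x` (its children). -/
def binTree (ρ : ℕ) : SimpleGraph {l : List Bool // l.length ≤ ρ} where
  Adj x y := (∃ b : Bool, (x : List Bool) = b :: (y : List Bool)) ∨
             (∃ b : Bool, (y : List Bool) = b :: (x : List Bool))
  symm := by constructor; rintro x y (h | h); exact Or.inr h; exact Or.inl h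
  loopless := by
    constructor; rintro x (⟨b, hb⟩ | ⟨b, hb⟩) <;>
      · have := congrArg List.length hb
        simp at this

/-- The `n × n` square grid graph. -/
def gridGraph (n : ℕ) : SimpleGraph (Fin n × Fin n) where
  Adj p q := (p.1 = q.1 ∧ ((p.2 : ℕ) + 1 = (q.2 : ℕ) ∨ (q.2 : ℕ) + 1 = (p.2 : ℕ))) ∨
             (p.2 = q.2 ∧ ((p.1 : ℕ) + 1 = (q.1 : ℕ) ∨ (q.1 : ℕ) + 1 = (p.1 : ℕ)))
  symm := by
    constructor; rintro p q (⟨h1, h2⟩ | ⟨h1, h2⟩)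
    · exact Or.inl ⟨h1.symm, h2.symm⟩
    · exact Or.inr ⟨h1.symm, h2.symm⟩
  loopless := by constructor; rintro p (⟨_, h | h⟩ | ⟨_, h | h⟩) <;> omega

/-- A graph is planar iff it is isomorphic to a minor of some square grid. -/
def IsPlanar {W : Type*} (H : SimpleGraph W) : Prop :=
  ∃ n : ℕ, HasMinor H (gridGraph n)

/-- `S` is the vertex set of an induced path in `G` from `x` to `y`. -/
def IsInducedPathSet {V : Type*} (G : SimpleGraph V) (S : Set V) (x y : V) : Prop :=
  ∃ p : G.Walk x y, p.IsPath ∧ {v | v ∈ p.support} = S ∧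
    ∀ u v : V, u ∈ p.support → v ∈ p.support → G.Adj u v → p.toSubgraph.Adj u v

/-- `G` has a stable strong `(κ, lam)`-block: a stable set `B` of at least `κ`
vertices together with, for each unordered pair of distinct vertices of `B`,
at least `lam` pairwise internally disjoint induced paths joining them, such that
path systems of distinct pairs meet exactly in the shared endpoints. -/
def HasStableStrongBlock {V : Type*} (G : SimpleGraph V) (κ lam : ℕ) : Prop :=
  ∃ (B : Set V) (P : V → V → Fin lam → Set V),
    κ ≤ B.ncard ∧
    (∀ x ∈ B, ∀ y ∈ B, x ≠ y → ¬ G.Adj x y) ∧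
    (∀ x ∈ B, ∀ y ∈ B, x ≠ y →
      (∀ i, IsInducedPathSet G (P x y i) x y) ∧
      (∀ i j, i ≠ j → ∀ v, v ∈ P x y i → v ∈ P x y j → v = x ∨ v = y) ∧
      (∀ i, P x y i = P y x i)) ∧
    (∀ x ∈ B, ∀ y ∈ B, ∀ x' ∈ B, ∀ y' ∈ B, x ≠ y → x' ≠ y' →
      ({x, y} : Set V) ≠ {x', y'} →
      (⋃ i, P x y i) ∩ (⋃ i, P x' y' i) = (({x, y} : Set V) ∩ {x', y'}))

/-- `G` is `(κ, lam)`-separable: there is no stable strong `(κ, lam)`-block in `G`. -/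
def Separable {V : Type*} (G : SimpleGraph V) (κ lam : ℕ) : Prop :=
  ¬ HasStableStrongBlock G κ lam

/-- In the tree `T` rooted at `u`, `w` is a child of `v`. -/
def IsChild {α : Type*} (T : SimpleGraph α) (u v w : α) : Prop :=
  T.Adj v w ∧ T.dist u w = T.dist u v + 1

/-- `(T, u)` is a `(δ, ρ)`-regular rooted tree: `T` is a tree, every vertex is at
distance at most `ρ` from `u`, and every vertex at distance less than `ρ` from `u`
has exactly `δ` children. -/
def RootedRegular {α : Type*} (T : SimpleGraph α) (u : α) (δ ρ : ℕ) : Prop :=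
  T.IsTree ∧ (∀ v, T.dist u v ≤ ρ) ∧
    ∀ v, T.dist u v < ρ → {w | IsChild T u v w}.ncard = δ

/-- The rooted tree induced by `T` on `s`, with root `r`, is a rooted subtree of
`(T, u)`: it is a tree and every child relation in it is a child relation in `(T, u)`. -/
def IsRootedSubtree {α : Type*} (T : SimpleGraph α) (u : α) (s : Set α) (r : ↥s) : Prop :=
  (T.induce s).IsTree ∧
    ∀ v w : ↥s, IsChild (T.induce s) r v w → IsChild T u (↑v) (↑w)

open Classical in
/-- The `i`-ancestor of `v` in the tree `T` rooted at `u`: the vertex on the unique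
`u`–`v` path at distance `i` from `v`. -/
noncomputable def ancestor {α : Type*} (T : SimpleGraph α) (u v : α) (i : ℕ) : α :=
  if h : ∃ w, T.dist u w + i = T.dist u v ∧ T.dist w v = i then h.choose else v

/-- The rooted tree `T` (mapped into `G` by `f`) is path-uniform in `G`. -/
def PathUniform {V β : Type*} (G : SimpleGraph V) (f : β → V) (T : SimpleGraph β)
    (r : β) (ρ : ℕ) : Prop :=
  ∀ v v' : β, T.dist r v = ρ → T.dist r v' = ρ → ∀ i j : ℕ, i ≤ ρ → j ≤ ρ →
    (G.Adj (f (ancestor T r v i)) (f (ancestor T r v j)) ↔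
      G.Adj (f (ancestor T r v' i)) (f (ancestor T r v' j)))

/-- The rooted tree `T` (mapped into `G` by `f`) is path-induced in `G`. -/
def PathInduced {V β : Type*} (G : SimpleGraph V) (f : β → V) (T : SimpleGraph β)
    (r : β) (ρ : ℕ) : Prop :=
  ∀ v : β, T.dist r v = ρ → ∀ i j : ℕ, i ≤ ρ → j ≤ ρ →
    (G.Adj (f (ancestor T r v i)) (f (ancestor T r v j)) ↔ (i + 1 = j ∨ j + 1 = i))

/-- The rooted tree `T` (mapped into `G` by `f`) is branch-induced in `G`: every
`G`-edge between vertices of `T` that is not a `T`-edge joins a vertex to one of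
its ancestors. -/
def BranchInduced {V β : Type*} (G : SimpleGraph V) (f : β → V) (T : SimpleGraph β)
    (r : β) : Prop :=
  ∀ v w : β, G.Adj (f v) (f w) → ¬ T.Adj v w →
    (T.dist r v + T.dist v w = T.dist r w ∨ T.dist r w + T.dist w v = T.dist r v)

/-- `G` has a (not necessarily induced) subgraph isomorphic to `H`. -/
def HasSubgraphIso {W V : Type*} (H : SimpleGraph W) (G : SimpleGraph V) : Prop :=
  ∃ f : W → V, Function.Injective f ∧ ∀ a b, H.Adj a b → G.Adj (f a) (f b)

/-- The spanning subgraph of `G` consisting of the edges of color `i` under the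
edge-coloring `F`. -/
def colorSub {V : Type*} {c : ℕ} (G : SimpleGraph V) (F : V → V → Fin c) (i : Fin c) :
    SimpleGraph V where
  Adj u v := G.Adj u v ∧ F u v = i ∧ F v u = i
  symm := by constructor; rintro u v ⟨h1, h2, h3⟩; exact ⟨h1.symm, h3, h2⟩
  loopless := by constructor; rintro u ⟨h, _, _⟩; exact G.loopless.irrefl u h

/-- Distance from `a` to `b` within the induced subgraph `G[S]` (via walks of `G`
all of whose vertices lie in `S`). -/
noncomputable def distIn {V : Type*} (G : SimpleGraph V) (S : Set V) (a b : V) : ℕ :=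
  sInf {n | ∃ w : G.Walk a b, w.length = n ∧ ∀ v ∈ w.support, v ∈ S}

/-- `(a 0, …, a (σ+1))` is a `(σ, θ)`-`X`-abyss in `G`. -/
def IsAbyss {V : Type*} (G : SimpleGraph V) (X : Set V) (σ θ : ℕ) (a : ℕ → V) : Prop :=
  ∃ (S : ℕ → Set V) (ρ : ℕ → ℕ),
    S 0 ⊆ X ∧ ConnectedIn G (S 0) ∧ (∀ k ≤ σ + 1, a k ∈ S 0) ∧
    (∀ i < σ,
      S (i + 1) ⊆ {v | v ∈ S i ∧ distIn G (S i) (a i) v = ρ i + 1} ∧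
      ConnectedIn G (S (i + 1)) ∧
      ∀ k, i + 1 ≤ k → k ≤ σ + 1 → a k ∈ S (i + 1)) ∧
    θ ≤ G.dist (a σ) (a (σ + 1))

/-- The torso of a tree decomposition `(T, β)` of `G` at the node `x`. -/
def torso {V ι : Type*} (G : SimpleGraph V) (T : SimpleGraph ι) (β : ι → Finset V)
    (x : ι) : SimpleGraph {v : V // v ∈ β x} where
  Adj u v := u ≠ v ∧ (G.Adj ↑u ↑v ∨ ∃ y, T.Adj x y ∧ ↑u ∈ β y ∧ ↑v ∈ β y)
  symm := by
    constructor; rintro u v ⟨hne, h | ⟨y, hy, h1, h2⟩⟩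
    · exact ⟨hne.symm, Or.inl h.symm⟩
    · exact ⟨hne.symm, Or.inr ⟨y, hy, h2, h1⟩⟩
  loopless := by constructor; rintro u ⟨hne, _⟩; exact hne rfl

/-- The vertex set of the component of `T - x` containing `y` (denoted `T_{y∖x}`). -/
def compAway {ι : Type*} (T : SimpleGraph ι) (y x : ι) : Set ι :=
  {z | ∃ w : T.Walk y z, x ∉ w.support}

/-- A tree decomposition `(T, β)` of `G` is tight. -/
def Tight {V ι : Type*} (G : SimpleGraph V) (T : SimpleGraph ι) (β : ι → Finset V) : Prop :=
  ∀ x y, T.Adj x y →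
    ∃ v₀ ∈ (⋃ z ∈ compAway T y x, (β z : Set V)) \ (⋃ z ∈ compAway T x y, (β z : Set V)),
      ∀ u : V, u ∈ β x → u ∈ β y →
        ∃ c : V, G.Adj u c ∧ ∃ w : G.Walk v₀ c, ∀ p ∈ w.support,
          p ∈ (⋃ z ∈ compAway T y x, (β z : Set V)) \ (⋃ z ∈ compAway T x y, (β z : Set V))

/-- `G` has a subgraph isomorphic to some subdivision of the complete graph `K_μ`:
equivalently, there are `μ` branch vertices joined by pairwise internally disjoint
paths of nonzero length. -/
def HasKSubdivision {V : Type*} (μ : ℕ) (G : SimpleGraph V) : Prop :=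
  ∃ b : Fin μ → V, Function.Injective b ∧
    ∃ P : ∀ i j : Fin μ, i < j → G.Walk (b i) (b j),
      (∀ i j (h : i < j), (P i j h).IsPath) ∧
      (∀ i j (h : i < j), ∀ m : Fin μ, b m ∈ (P i j h).support → m = i ∨ m = j) ∧
      (∀ i j (h : i < j), ∀ k l (h' : k < l), (i, j) ≠ (k, l) →
        ∀ v : V, v ∈ (P i j h).support → v ∈ (P k l h').support →
          (v = b i ∨ v = b j) ∧ (v = b k ∨ v = b l))


section S9Aux
variable {V : Type} (G : SimpleGraph V) (x : ℕ → V)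

/-- lengths of increasing `G`-adjacent chains from index `0` to index `i`. -/
def fdSet (i : ℕ) : Set ℕ :=
  {n | ∃ c : ℕ → ℕ, c 0 = 0 ∧ c n = i ∧
    ∀ t < n, c t < c (t + 1) ∧ G.Adj (x (c t)) (x (c (t + 1)))}

/-- forward distance from index `0` to index `i`. -/
noncomputable def fd (i : ℕ) : ℕ := sInf (fdSet G x i)

lemma self_mem_fdSet {N i : ℕ} (hadj : ∀ t, t < N → G.Adj (x t) (x (t + 1)))
    (hi : i ≤ N) : i ∈ fdSet G x i :=
  ⟨id, rfl, rfl, fun t ht => ⟨Nat.lt_succ_self t, hadj t (lt_of_lt_of_le ht hi)⟩⟩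

lemma eq_zero_of_fd_eq_zero {i : ℕ} (hne : (fdSet G x i).Nonempty)
    (h : fd G x i = 0) : i = 0 := by
  have h0 : 0 ∈ fdSet G x i := h ▸ Nat.sInf_mem hne
  obtain ⟨c, hc0, hcn, -⟩ := h0
  rw [hc0] at hcn; exact hcn.symm

lemma fd_step {i j : ℕ} (hne : (fdSet G x i).Nonempty) (hij : i < j)
    (hadj : G.Adj (x i) (x j)) : fd G x j ≤ fd G x i + 1 := by
  obtain ⟨n, hn⟩ : ∃ n, fd G x i = n := ⟨_, rfl⟩
  obtain ⟨c, hc0, hcn, hc⟩ : n ∈ fdSet G x i := hn ▸ Nat.sInf_mem hne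
  rw [hn]
  refine Nat.sInf_le ⟨fun t => if t = n + 1 then j else c t, by simpa using hc0, by simp, ?_⟩
  intro t ht
  by_cases h1 : t = n
  · subst h1
    have h2 : t ≠ t + 1 := by omega
    simp only [if_neg h2, if_pos rfl, hcn]
    simp [hcn]
    exact ⟨hij, hadj⟩
  · have h2 : t ≠ n + 1 := by omega
    have h3 : t + 1 ≠ n + 1 := by omega
    simp only [if_neg h2, if_neg h3]
    exact hc t (by omega)

lemma fd_pred {i m : ℕ} (h : fd G x i = m + 1) :
    ∃ j, j < i ∧ G.Adj (x j) (x i) ∧ fd G x j = m := by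
  have hne : (fdSet G x i).Nonempty := by
    by_contra hemp
    rw [Set.not_nonempty_iff_eq_empty] at hemp
    rw [fd, hemp] at h
    simp at h
  have hmem : m + 1 ∈ fdSet G x i := h ▸ Nat.sInf_mem hne
  obtain ⟨c, hc0, hcn, hc⟩ := hmem
  have hstep := hc m (Nat.lt_succ_self m)
  rw [hcn] at hstep
  have hne' : (fdSet G x (c m)).Nonempty :=
    ⟨m, c, hc0, rfl, fun t ht => hc t (by omega)⟩
  have hle : fd G x (c m) ≤ m :=
    Nat.sInf_le ⟨c, hc0, rfl, fun t ht => hc t (by omega)⟩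
  have hge : fd G x i ≤ fd G x (c m) + 1 := fd_step G x hne' hstep.1 hstep.2
  exact ⟨c m, hstep.1, hstep.2, by omega⟩

lemma fd_exists_of_le : ∀ n i m, fd G x i = n → m ≤ n → ∃ v, v ≤ i ∧ fd G x v = m := by
  intro n
  induction n with
  | zero =>
    intro i m h hm
    obtain rfl : m = 0 := by omega
    exact ⟨i, le_rfl, h⟩
  | succ n ih =>
    intro i m h hm
    rcases Nat.eq_or_lt_of_le hm with rfl | hm'
    · exact ⟨i, le_rfl, h⟩
    · obtain ⟨j, hji, -, hfj⟩ := fd_pred G x h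
      obtain ⟨v, hv, hfv⟩ := ih j m hfj (by omega)
      exact ⟨v, by omega, hfv⟩

open Classical in
noncomputable def gchain (v : ℕ) : ℕ → ℕ
  | 0 => v
  | k + 1 =>
    if h : ∃ j, j < gchain v k ∧ G.Adj (x j) (x (gchain v k)) ∧
        fd G x j + 1 = fd G x (gchain v k)
    then h.choose else 0

lemma gchain_succ {v k : ℕ}
    (hex : ∃ j, j < gchain G x v k ∧ G.Adj (x j) (x (gchain G x v k)) ∧
      fd G x j + 1 = fd G x (gchain G x v k)) :
    gchain G x v (k + 1) < gchain G x v k ∧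
      G.Adj (x (gchain G x v (k + 1))) (x (gchain G x v k)) ∧
      fd G x (gchain G x v (k + 1)) + 1 = fd G x (gchain G x v k) := by
  rw [gchain, dif_pos hex]
  exact hex.choose_spec

lemma sum_pow_le {τ : ℕ} (hτ : 1 ≤ τ) : ∀ ρ, 1 ≤ ρ →
    ∑ t ∈ Finset.range (ρ + 1), (τ - 1) ^ t ≤ τ ^ ρ := by
  intro ρ
  induction ρ with
  | zero => omega
  | succ ρ ih =>
    intro _
    rcases Nat.eq_or_lt_of_le (Nat.one_le_iff_ne_zero.mpr (by omega) : 1 ≤ ρ + 1) with h1 | h1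
    · rw [← h1]
      simp [Finset.sum_range_succ]
      omega
    · have hρ : 1 ≤ ρ := by omega
      have := ih hρ
      rw [Finset.sum_range_succ']
      simp only [pow_zero]
      have hfac : ∀ t, (τ - 1) ^ (t + 1) = (τ - 1) * (τ - 1) ^ t := fun t => pow_succ' _ _
      rw [Finset.sum_congr rfl fun t _ => hfac t, ← Finset.mul_sum]
      have h2 : 1 ≤ τ ^ ρ := Nat.one_le_pow _ _ (by omega)
      have h3 : (τ - 1) * (∑ t ∈ Finset.range (ρ + 1), (τ - 1) ^ t) ≤ (τ - 1) * τ ^ ρ :=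
        Nat.mul_le_mul_left _ this
      have h4 : (τ - 1) * τ ^ ρ + 1 ≤ τ ^ (ρ + 1) := by
        rw [pow_succ']
        rcases Nat.exists_eq_add_of_le hτ with ⟨σ, rfl⟩
        simp [Nat.add_sub_cancel_left] at *
      omega

end S9Aux

/-- Along a path `x_0 – ⋯ – x_{τ^ρ}` (a not necessarily induced subgraph of
`G`), either some `x_{i₀}` has at least `τ` neighbors among the later vertices, or there
are indices `0 = j_0 < j_1 < ⋯ < j_ρ` such that `x_{j_0} – x_{j_1} – ⋯ – x_{j_ρ}`
is an induced path in `G`. -/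



theorem statement9 {V : Type} [Fintype V] (ρ τ : ℕ) (hρ : 1 ≤ ρ) (hτ : 1 ≤ τ)
    (G : SimpleGraph V) (x : ℕ → V)
    (hinj : ∀ i j, i ≤ τ ^ ρ → j ≤ τ ^ ρ → x i = x j → i = j)
    (hadj : ∀ i, i < τ ^ ρ → G.Adj (x i) (x (i + 1))) :
    (∃ i₀ ≤ τ ^ ρ, τ ≤ {i : ℕ | i₀ + 1 ≤ i ∧ i ≤ τ ^ ρ ∧ G.Adj (x i₀) (x i)}.ncard) ∨
    (∃ j : ℕ → ℕ, j 0 = 0 ∧ (∀ k < ρ, j k < j (k + 1)) ∧ j ρ ≤ τ ^ ρ ∧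
      ∀ k l, k ≤ ρ → l ≤ ρ →
        (G.Adj (x (j k)) (x (j l)) ↔ (k + 1 = l ∨ l + 1 = k))) := by
  classical
  by_cases hA : ∃ i₀ ≤ τ ^ ρ, τ ≤ {i : ℕ | i₀ + 1 ≤ i ∧ i ≤ τ ^ ρ ∧ G.Adj (x i₀) (x i)}.ncard
  · exact Or.inl hA
  right
  push_neg at hA
  set N := τ ^ ρ with hN
  have hne : ∀ i, i ≤ N → (fdSet G x i).Nonempty :=
    fun i hi => ⟨i, self_mem_fdSet G x hadj hi⟩
  set A : ℕ → Finset ℕ := fun t => (Finset.range (N + 1)).filter (fun i => fd G x i = t)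
    with hA'
  have hcard : ∀ t, (A t).card ≤ (τ - 1) ^ t := by
    intro t
    induction t with
    | zero =>
      have hsub : A 0 ⊆ {0} := by
        intro i hi
        simp only [hA', Finset.mem_filter, Finset.mem_range] at hi
        have := eq_zero_of_fd_eq_zero G x (hne i (by omega)) hi.2
        simp [this]
      simpa using Finset.card_le_card hsub
    | succ t ih =>
      set p : ℕ → ℕ := fun i =>
        if h : ∃ j, j < i ∧ G.Adj (x j) (x i) ∧ fd G x j = t then h.choose else 0 with hp
      have hpspec : ∀ i ∈ A (t + 1), p i < i ∧ G.Adj (x (p i)) (x i) ∧ fd G x (p i) = t := by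
        intro i hi
        simp only [hA', Finset.mem_filter, Finset.mem_range] at hi
        have hex := fd_pred G x hi.2
        simp only [hp, dif_pos hex]
        exact hex.choose_spec
      have hmaps : ∀ i ∈ A (t + 1), p i ∈ A t := by
        intro i hi
        have h1 := hpspec i hi
        simp only [hA', Finset.mem_filter, Finset.mem_range] at hi ⊢
        exact ⟨by omega, h1.2.2⟩
      have hfib : ∀ b ∈ A t, ((A (t + 1)).filter (fun i => p i = b)).card ≤ τ - 1 := by
        intro b hb
        simp only [hA', Finset.mem_filter, Finset.mem_range] at hb
        set F : Finset ℕ :=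
          (Finset.range (N + 1)).filter (fun i => b + 1 ≤ i ∧ G.Adj (x b) (x i)) with hF
        have hsub2 : (A (t + 1)).filter (fun i => p i = b) ⊆ F := by
          intro i hi
          rw [Finset.mem_filter] at hi
          have h1 := hpspec i hi.1
          rw [hi.2] at h1
          have h2 : i ∈ A (t + 1) := hi.1
          simp only [hA', Finset.mem_filter, Finset.mem_range] at h2
          simp only [hF, Finset.mem_filter, Finset.mem_range]
          exact ⟨h2.1, by omega, h1.2.1⟩
        have hFcard : F.card ≤ τ - 1 := by
          have h1 := hA b (by omega)
          have h2 : {i : ℕ | b + 1 ≤ i ∧ i ≤ N ∧ G.Adj (x b) (x i)} = ↑F := by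
            ext i
            simp only [hF, Finset.coe_filter, Finset.mem_range, Set.mem_setOf_eq]
            constructor
            · rintro ⟨u1, u2, u3⟩; exact ⟨by omega, u1, u3⟩
            · rintro ⟨u1, u2, u3⟩; exact ⟨u2, by omega, u3⟩
          rw [h2, Set.ncard_coe_finset] at h1
          omega
        exact le_trans (Finset.card_le_card hsub2) hFcard
      have himg := Finset.card_le_mul_card_image_of_maps_to hmaps (τ - 1) hfib
      calc (A (t + 1)).card ≤ (τ - 1) * (A t).card := himg
        _ ≤ (τ - 1) * (τ - 1) ^ t := Nat.mul_le_mul_left _ ih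
        _ = (τ - 1) ^ (t + 1) := (pow_succ' _ _).symm
  -- there is a vertex with forward distance > ρ
  have hbig : ∃ i, i ≤ N ∧ ρ < fd G x i := by
    by_contra hc
    push_neg at hc
    have hsub : Finset.range (N + 1) ⊆ (Finset.range (ρ + 1)).biUnion A := by
      intro i hi
      rw [Finset.mem_range] at hi
      rw [Finset.mem_biUnion]
      refine ⟨fd G x i, ?_, ?_⟩
      · rw [Finset.mem_range]
        have := hc i (by omega)
        omega
      · exact Finset.mem_filter.mpr ⟨Finset.mem_range.mpr hi, rfl⟩
    have h1 : N + 1 ≤ ∑ t ∈ Finset.range (ρ + 1), (A t).card := by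
      calc N + 1 = (Finset.range (N + 1)).card := (Finset.card_range _).symm
        _ ≤ ((Finset.range (ρ + 1)).biUnion A).card := Finset.card_le_card hsub
        _ ≤ ∑ t ∈ Finset.range (ρ + 1), (A t).card := Finset.card_biUnion_le
    have h2 : ∑ t ∈ Finset.range (ρ + 1), (A t).card
        ≤ ∑ t ∈ Finset.range (ρ + 1), (τ - 1) ^ t :=
      Finset.sum_le_sum fun t _ => hcard t
    have h3 := sum_pow_le hτ ρ hρ
    omega
  obtain ⟨i, hiN, hilt⟩ := hbig
  obtain ⟨v, hvi, hfv⟩ := fd_exists_of_le G x (fd G x i) i ρ rfl (by omega)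
  have hvN : v ≤ N := by omega
  -- the descending chain
  have key : ∀ k, k ≤ ρ → fd G x (gchain G x v k) = ρ - k := by
    intro k
    induction k with
    | zero => intro _; simpa [gchain] using hfv
    | succ k ih =>
      intro hk
      have h1 := ih (by omega)
      have hex2 : ∃ j, j < gchain G x v k ∧ G.Adj (x j) (x (gchain G x v k)) ∧
          fd G x j + 1 = fd G x (gchain G x v k) := by
        obtain ⟨j, hj1, hj2, hj3⟩ :=
          fd_pred G x (show fd G x (gchain G x v k) = (ρ - (k + 1)) + 1 by omega)
        exact ⟨j, hj1, hj2, by omega⟩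
      have h2 := gchain_succ G x hex2
      omega
  have step : ∀ k, k < ρ → gchain G x v (k + 1) < gchain G x v k ∧
      G.Adj (x (gchain G x v (k + 1))) (x (gchain G x v k)) := by
    intro k hk
    have h1 := key k (by omega)
    have hex2 : ∃ j, j < gchain G x v k ∧ G.Adj (x j) (x (gchain G x v k)) ∧
        fd G x j + 1 = fd G x (gchain G x v k) := by
      obtain ⟨j, hj1, hj2, hj3⟩ :=
        fd_pred G x (show fd G x (gchain G x v k) = (ρ - (k + 1)) + 1 by omega)
      exact ⟨j, hj1, hj2, by omega⟩
    have h2 := gchain_succ G x hex2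
    exact ⟨h2.1, h2.2.1⟩
  have gle : ∀ k, k ≤ ρ → gchain G x v k ≤ v := by
    intro k
    induction k with
    | zero => intro _; simp [gchain]
    | succ k ih =>
      intro hk
      have := (step k (by omega)).1
      have := ih (by omega)
      omega
  have gdec : ∀ b, b ≤ ρ → ∀ a, a < b → gchain G x v b < gchain G x v a := by
    intro b
    induction b with
    | zero => intro _ a ha; omega
    | succ b ih =>
      intro hb a ha
      have h1 := (step b (by omega)).1
      rcases eq_or_lt_of_le (Nat.lt_succ_iff.mp ha) with rfl | h
      · exact h1
      · exact h1.trans (ih (by omega) a h)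
  have jle : ∀ k, k ≤ ρ → gchain G x v (ρ - k) ≤ N :=
    fun k hk => le_trans (gle (ρ - k) (by omega)) hvN
  have fdj : ∀ k, k ≤ ρ → fd G x (gchain G x v (ρ - k)) = k := by
    intro k hk
    have := key (ρ - k) (by omega)
    omega
  refine ⟨fun k => gchain G x v (ρ - k), ?_, ?_, ?_, ?_⟩
  · show gchain G x v (ρ - 0) = 0
    rw [Nat.sub_zero]
    have h0 : fd G x (gchain G x v ρ) = 0 := by
      have := key ρ le_rfl
      omega
    exact eq_zero_of_fd_eq_zero G x (hne _ (le_trans (gle ρ le_rfl) hvN)) h0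
  · intro k hk
    show gchain G x v (ρ - k) < gchain G x v (ρ - (k + 1))
    exact gdec (ρ - k) (by omega) (ρ - (k + 1)) (by omega)
  · show gchain G x v (ρ - ρ) ≤ N
    rw [Nat.sub_self]
    simpa [gchain] using hvN
  · intro k l hk hl
    constructor
    · intro hadj'
      by_contra hcon
      push_neg at hcon
      rcases lt_trichotomy k l with h | h | h
      · have hlt : gchain G x v (ρ - k) < gchain G x v (ρ - l) :=
          gdec (ρ - k) (by omega) (ρ - l) (by omega)
        have h1 := fd_step G x (hne _ (jle k hk)) hlt hadj'
        have h2 := fdj k hk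
        have h3 := fdj l hl
        omega
      · subst h
        exact G.loopless.irrefl _ hadj'
      · have hlt : gchain G x v (ρ - l) < gchain G x v (ρ - k) :=
          gdec (ρ - l) (by omega) (ρ - k) (by omega)
        have h1 := fd_step G x (hne _ (jle l hl)) hlt hadj'.symm
        have h2 := fdj k hk
        have h3 := fdj l hl
        omega
    · rintro (h | h)
      · have hstep := (step (ρ - l) (by omega)).2
        have he : ρ - l + 1 = ρ - k := by omega
        rw [he] at hstep
        exact hstep
      · have hstep := (step (ρ - k) (by omega)).2
        have he : ρ - k + 1 = ρ - l := by omega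
        rw [he] at hstep
        exact hstep.symm
end

section
/- Let δ,τ ∈ ℕ⁺ and ρ ∈ ℕ∪{0}. Let G be a finite simple graph with no minor isomorphic to K_{τ+1}, and let (T,u) be a (Δ,ρ)-regular rooted tree, for some Δ ∈ ℕ⁺ with Δ ≥ τ^{δ−1}, such that T is a subgraph of G. Then some (δ,ρ)-regular rooted subtree (T',u) of (T,u) is branch-induced in G. -/
section Statement11Aux

open SimpleGraph

variable {α : Type}

/-- `a` lies on the unique `u`–`b` path: ancestor relation via distances. -/
def Anc (T : SimpleGraph α) (u a b : α) : Prop :=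
  T.dist u a + T.dist a b = T.dist u b

namespace Statement11

variable {T G : SimpleGraph α} {u : α}

lemma walk_le (h : T ≤ G) {a b : α} (p : T.Walk a b) :
    ∃ q : G.Walk a b, q.support = p.support := by
  induction p with
  | nil => exact ⟨SimpleGraph.Walk.nil, rfl⟩
  | cons had p ih =>
    obtain ⟨q, hq⟩ := ih
    exact ⟨SimpleGraph.Walk.cons (h had) q, by simp [hq]⟩

lemma append_path {a b c : α} {p : T.Walk a b} {q : T.Walk b c}
    (hp : p.IsPath) (hq : q.IsPath)
    (h : ∀ x, x ∈ p.support → x ∈ q.support → x = b) :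
    (p.append q).IsPath := by
  rw [SimpleGraph.Walk.isPath_def] at hp hq ⊢
  rw [SimpleGraph.Walk.support_append, List.nodup_append]
  have htail : q.support.tail.Nodup ∧ b ∉ q.support.tail := by
    have := hq
    rw [q.support_eq_cons, List.nodup_cons] at this
    exact ⟨this.2, this.1⟩
  refine ⟨hp, htail.1, ?_⟩
  intro x hx y hx' hxy
  subst hxy
  have hxq : x ∈ q.support := by rw [q.support_eq_cons]; exact List.mem_cons_of_mem _ hx'
  have := h x hx hxq
  subst this
  exact htail.2 hx'

lemma concat_path {a b c : α} {p : T.Walk a b} (hp : p.IsPath) (had : T.Adj b c)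
    (hc : c ∉ p.support) : (p.concat had).IsPath := by
  rw [SimpleGraph.Walk.concat_eq_append]
  refine append_path hp ?_ ?_
  · simp [SimpleGraph.Walk.cons_isPath_iff, had.ne]
  · intro x hx hx'
    simp only [SimpleGraph.Walk.support_cons, SimpleGraph.Walk.support_nil,
      List.mem_cons, List.mem_singleton, List.not_mem_nil, or_false] at hx'
    rcases hx' with rfl | rfl
    · rfl
    · exact absurd hx hc

lemma exists_path_dist (hT : T.IsTree) (a b : α) :
    ∃ p : T.Walk a b, p.IsPath ∧ p.length = T.dist a b := by
  classical
  obtain ⟨q, hq⟩ := hT.isConnected.exists_walk_length_eq_dist a b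
  refine ⟨q.bypass, q.bypass_isPath, le_antisymm ?_ (SimpleGraph.dist_le _)⟩
  exact le_trans q.length_bypass_le hq.le

lemma path_length_eq (hT : T.IsTree) {a b : α} {p : T.Walk a b} (hp : p.IsPath) :
    p.length = T.dist a b := by
  obtain ⟨q, hq, hl⟩ := exists_path_dist hT a b
  rw [(hT.existsUnique_path a b).unique hp hq, hl]

lemma dist_split (hT : T.IsTree) {a b x : α} {p : T.Walk a b} (hp : p.IsPath)
    (hx : x ∈ p.support) : T.dist a x + T.dist x b = T.dist a b := by
  classical
  rw [← path_length_eq hT hp, ← path_length_eq hT (hp.takeUntil hx),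
    ← path_length_eq hT (hp.dropUntil hx)]
  have := congrArg SimpleGraph.Walk.length (p.take_spec hx)
  rwa [SimpleGraph.Walk.length_append] at this

lemma anc_refl (a : α) : Anc T u a a := by
  simp [Anc, SimpleGraph.dist_self]

lemma anc_root (b : α) : Anc T u u b := by
  simp [Anc, SimpleGraph.dist_self]

lemma anc_dist (hT : T.IsTree) {a b c : α} (h1 : Anc T u a b) (h2 : Anc T u b c) :
    Anc T u a c ∧ T.dist a b + T.dist b c = T.dist a c := by
  have conn := hT.isConnected
  have t1 := conn.dist_triangle (u := a) (v := b) (w := c)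
  have t2 := conn.dist_triangle (u := u) (v := a) (w := c)
  unfold Anc at h1 h2 ⊢
  omega

lemma anc_antisymm (hT : T.IsTree) {a b : α} (h1 : Anc T u a b) (h2 : Anc T u b a) :
    a = b := by
  have hc : T.dist a b = T.dist b a := SimpleGraph.dist_comm
  have h0 : T.dist a b = 0 := by unfold Anc at h1 h2; omega
  exact hT.isConnected.dist_eq_zero_iff.mp h0

lemma mem_path_of_anc (hT : T.IsTree) {b x : α} (h : Anc T u x b) {p : T.Walk u b}
    (hp : p.IsPath) : x ∈ p.support := by
  obtain ⟨p1, hp1, _⟩ := exists_path_dist hT u x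
  obtain ⟨p2, hp2, _⟩ := exists_path_dist hT x b
  have conn := hT.isConnected
  have hmeet : ∀ y, y ∈ p1.support → y ∈ p2.support → y = x := by
    intro y h1 h2
    have d1 := dist_split hT hp1 h1
    have d2 := dist_split hT hp2 h2
    have t : T.dist u b ≤ T.dist u y + T.dist y b := conn.dist_triangle
    have hcm : T.dist y x = T.dist x y := SimpleGraph.dist_comm
    have h0 : T.dist x y = 0 := by unfold Anc at h; omega
    exact (conn.dist_eq_zero_iff.mp h0).symm
  have happ : (p1.append p2).IsPath := append_path hp1 hp2 hmeet
  have := (hT.existsUnique_path u b).unique happ hp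
  rw [← this, SimpleGraph.Walk.mem_support_append_iff]
  exact Or.inl p1.end_mem_support

lemma eq_of_anc_of_dist_eq (hT : T.IsTree) {a b w : α} (ha : Anc T u a w)
    (hb : Anc T u b w) (hd : T.dist u a = T.dist u b) : a = b := by
  classical
  obtain ⟨p, hp, _⟩ := exists_path_dist hT u w
  have hap := mem_path_of_anc hT ha hp
  have hbp := mem_path_of_anc hT hb hp
  have conn := hT.isConnected
  have hsplit : b ∈ (p.takeUntil a hap).support ∨ b ∈ (p.dropUntil a hap).support := by
    rw [← SimpleGraph.Walk.mem_support_append_iff, p.take_spec hap]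
    exact hbp
  rcases hsplit with h | h
  · have d := dist_split hT (hp.takeUntil hap) h
    have h0 : T.dist b a = 0 := by unfold Anc at ha hb; omega
    exact (conn.dist_eq_zero_iff.mp h0).symm
  · have d := dist_split hT (hp.dropUntil hap) h
    have h0 : T.dist a b = 0 := by unfold Anc at ha hb; omega
    exact conn.dist_eq_zero_iff.mp h0

lemma child_anc (hT : T.IsTree) {v w : α} (h : IsChild T u v w) :
    Anc T u v w ∧ T.dist v w = 1 := by
  have h1 : T.dist v w = 1 := SimpleGraph.dist_eq_one_iff_adj.mpr h.1
  have h2 := h.2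
  exact ⟨by unfold Anc; omega, h1⟩

lemma subtree_disjoint (hT : T.IsTree) {v c c' w : α} (hc : IsChild T u v c)
    (hc' : IsChild T u v c') (hw : Anc T u c w) (hw' : Anc T u c' w) : c = c' :=
  eq_of_anc_of_dist_eq hT hw hw' (by rw [hc.2, hc'.2])

lemma up_or_down (hT : T.IsTree) {a b : α} (had : T.Adj a b) :
    T.dist u b = T.dist u a + 1 ∨ T.dist u a = T.dist u b + 1 := by
  classical
  obtain ⟨p, hp, hl⟩ := exists_path_dist hT u b
  by_cases hab : a ∈ p.support
  · left
    have d := dist_split hT hp hab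
    have h1 : T.dist a b = 1 := SimpleGraph.dist_eq_one_iff_adj.mpr had
    omega
  · right
    have hc := concat_path hp had.symm hab
    have hlen := path_length_eq hT hc
    rw [SimpleGraph.Walk.length_concat, hl] at hlen
    omega

lemma anc_step (hT : T.IsTree) {v x : α} (h : Anc T u v x) (hne : x ≠ v) :
    ∃ c, IsChild T u v c ∧ Anc T u c x := by
  have conn := hT.isConnected
  obtain ⟨p, hp, hl⟩ := exists_path_dist hT v x
  cases p with
  | nil => exact absurd rfl hne
  | cons had q =>
    rename_i c
    have hq : q.IsPath := hp.of_cons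
    have hql : q.length = T.dist c x := path_length_eq hT hq
    rw [SimpleGraph.Walk.length_cons] at hl
    have htri : T.dist u x ≤ T.dist u c + T.dist c x := conn.dist_triangle
    rcases up_or_down hT had with hup | hdown
    · refine ⟨c, ⟨had, hup⟩, ?_⟩
      unfold Anc at h ⊢
      omega
    · exfalso
      unfold Anc at h
      omega

lemma anc_mem_path_anc (hT : T.IsTree) {c w x : α} (hcw : Anc T u c w)
    {p : T.Walk c w} (hp : p.IsPath) (hx : x ∈ p.support) : Anc T u c x := by
  have conn := hT.isConnected
  have d := dist_split hT hp hx
  have t1 : T.dist u x ≤ T.dist u c + T.dist c x := conn.dist_triangle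
  have t2 : T.dist u w ≤ T.dist u x + T.dist x w := conn.dist_triangle
  unfold Anc at hcw ⊢
  omega

lemma anc_connectedIn (hT : T.IsTree) (hsub : T ≤ G) (c : α) :
    ConnectedIn G {w | Anc T u c w} := by
  refine ⟨⟨c, anc_refl c⟩, ?_⟩
  intro a ha b hb
  obtain ⟨p1, hp1, _⟩ := exists_path_dist hT c a
  obtain ⟨p2, hp2, _⟩ := exists_path_dist hT c b
  obtain ⟨q, hq⟩ := walk_le hsub (p1.reverse.append p2)
  refine ⟨q, ?_⟩
  intro x hx
  rw [hq, SimpleGraph.Walk.mem_support_append_iff, SimpleGraph.Walk.support_reverse,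
    List.mem_reverse] at hx
  rcases hx with hx | hx
  · exact anc_mem_path_anc hT ha hp1 hx
  · exact anc_mem_path_anc hT hb hp2 hx

lemma noCliqueChildren (hT : T.IsTree) (hsub : T ≤ G) {τ : ℕ}
    (hminor : ¬ HasMinor (completeGraph (Fin (τ + 1))) G) {v : α} :
    ¬ ∃ B : Finset α, (∀ c ∈ B, IsChild T u v c) ∧ B.card = τ ∧
      (∀ c ∈ B, ∀ c' ∈ B, c ≠ c' → ∃ a b, Anc T u c a ∧ Anc T u c' b ∧ G.Adj a b) := by
  rintro ⟨B, hBc, hBcard, hBt⟩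
  apply hminor
  have e : ↥B ≃ Fin τ := Finset.equivFinOfCardEq hBcard
  have hinj : ∀ i j : Fin τ, (↑(e.symm i) : α) = ↑(e.symm j) → i = j := by
    intro i j h
    exact e.symm.injective (Subtype.coe_injective h)
  refine ⟨Fin.cons {v} (fun i => {w | Anc T u (↑(e.symm i)) w}), ?_, ?_, ?_⟩
  · intro w
    refine Fin.cases ?_ ?_ w
    · simp only [Fin.cons_zero]
      refine ⟨⟨v, rfl⟩, ?_⟩
      intro a ha b hb
      rw [Set.mem_singleton_iff] at ha hb
      subst ha; subst hb
      exact ⟨SimpleGraph.Walk.nil, by simp⟩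
    · intro i
      simp only [Fin.cons_succ]
      exact anc_connectedIn hT hsub _
  · have hdisj0 : ∀ j : Fin τ, Disjoint ({v} : Set α) {w | Anc T u (↑(e.symm j)) w} := by
      intro j
      rw [Set.disjoint_left]
      intro x hx1 hx2
      rw [Set.mem_singleton_iff] at hx1
      subst hx1
      simp only [Set.mem_setOf_eq] at hx2
      have hch := (hBc _ (e.symm j).2).2
      unfold Anc at hx2
      omega
    intro w w'
    refine Fin.cases ?_ ?_ w
    · refine Fin.cases ?_ ?_ w'
      · intro hne; exact absurd rfl hne
      · intro j _
        simp only [Fin.cons_zero, Fin.cons_succ]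
        exact hdisj0 j
    · intro i
      refine Fin.cases ?_ ?_ w'
      · intro _
        simp only [Fin.cons_zero, Fin.cons_succ]
        exact (hdisj0 i).symm
      · intro j hne
        simp only [Fin.cons_succ]
        have hij : i ≠ j := by rintro rfl; exact hne rfl
        rw [Set.disjoint_left]
        intro x hx hx'
        simp only [Set.mem_setOf_eq] at hx hx'
        exact hij (hinj i j (subtree_disjoint hT (hBc _ (e.symm i).2) (hBc _ (e.symm j).2) hx hx'))
  · intro w w' hadj
    have hne : w ≠ w' := hadj.ne
    clear hadj
    revert hne
    refine Fin.cases ?_ ?_ w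
    · refine Fin.cases ?_ ?_ w'
      · intro hne; exact absurd rfl hne
      · intro j _
        simp only [Fin.cons_zero, Fin.cons_succ]
        exact ⟨v, rfl, ↑(e.symm j), anc_refl _, hsub (hBc _ (e.symm j).2).1⟩
    · intro i
      refine Fin.cases ?_ ?_ w'
      · intro _
        simp only [Fin.cons_zero, Fin.cons_succ]
        exact ⟨↑(e.symm i), anc_refl _, v, rfl, (hsub (hBc _ (e.symm i).2).1).symm⟩
      · intro j hne
        simp only [Fin.cons_succ]
        have hij : i ≠ j := by rintro rfl; exact hne rfl
        have hcc : (↑(e.symm i) : α) ≠ ↑(e.symm j) := fun h => hij (hinj i j h)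
        obtain ⟨a, b, h1, h2, h3⟩ := hBt _ (e.symm i).2 _ (e.symm j).2 hcc
        exact ⟨a, h1, b, h2, h3⟩

lemma ramsey (r : α → α → Prop) (hsymm : ∀ a b, r a b → r b a) :
    ∀ (δ τ : ℕ) (A : Finset α), τ ^ (δ - 1) ≤ A.card →
      (¬ ∃ B ⊆ A, B.card = τ ∧ ∀ c ∈ B, ∀ c' ∈ B, c ≠ c' → r c c') →
      ∃ B ⊆ A, B.card = δ ∧ ∀ c ∈ B, ∀ c' ∈ B, c ≠ c' → ¬ r c c' := by
  classical
  intro δ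
  induction δ with
  | zero =>
    intro τ A _ _
    exact ⟨∅, Finset.empty_subset _, Finset.card_empty, by simp⟩
  | succ δ ihδ =>
    intro τ
    induction τ with
    | zero =>
      intro A hcard hncl
      exact absurd ⟨∅, Finset.empty_subset _, Finset.card_empty, by simp⟩ hncl
    | succ τ ihτ =>
      intro A hcard hncl
      have hA : A.Nonempty := Finset.card_pos.mp (lt_of_lt_of_le (pow_pos (Nat.succ_pos τ) _) hcard)
      obtain ⟨x, hx⟩ := hA
      rcases Nat.eq_zero_or_pos δ with rfl | hδpos
      · refine ⟨{x}, Finset.singleton_subset_iff.mpr hx, Finset.card_singleton x, ?_⟩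
        intro c hc c' hc' hne
        rw [Finset.mem_singleton] at hc hc'
        subst hc; subst hc'
        exact absurd rfl hne
      · obtain ⟨k, rfl⟩ : ∃ k, δ = k + 1 := ⟨δ - 1, by omega⟩
        set N := (A.erase x).filter (fun y => r x y) with hNdef
        set M := (A.erase x).filter (fun y => ¬ r x y) with hMdef
        have hNM : N.card + M.card = A.card - 1 := by
          rw [hNdef, hMdef, Finset.card_filter_add_card_filter_not,
            Finset.card_erase_of_mem hx]
        have hNsub : N ⊆ A := (Finset.filter_subset _ _).trans (Finset.erase_subset _ _)
        have hMsub : M ⊆ A := (Finset.filter_subset _ _).trans (Finset.erase_subset _ _)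
        simp only [Nat.add_sub_cancel] at hcard
        by_cases hNbig : (τ : ℕ) ^ (k + 2 - 1) ≤ N.card
        · have hnclN : ¬ ∃ B ⊆ N, B.card = τ ∧ ∀ c ∈ B, ∀ c' ∈ B, c ≠ c' → r c c' := by
            rintro ⟨B, hBN, hBcard, hBcl⟩
            have hxB : x ∉ B := fun hxB => (Finset.mem_erase.mp
              (Finset.mem_of_mem_filter _ (hBN hxB))).1 rfl
            refine hncl ⟨insert x B, ?_, ?_, ?_⟩
            · exact Finset.insert_subset hx (hBN.trans hNsub)
            · rw [Finset.card_insert_of_notMem hxB, hBcard]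
            · intro c hc c' hc' hne
              rcases Finset.mem_insert.mp hc with hcx | hcB
              · rcases Finset.mem_insert.mp hc' with hcx' | hcB'
                · exact absurd (hcx.trans hcx'.symm) hne
                · rw [hcx]; exact (Finset.mem_filter.mp (hBN hcB')).2
              · rcases Finset.mem_insert.mp hc' with hcx' | hcB'
                · rw [hcx']; exact hsymm _ _ (Finset.mem_filter.mp (hBN hcB)).2
                · exact hBcl c hcB c' hcB' hne
          obtain ⟨B, hBN, hBcard, hBind⟩ := ihτ N hNbig hnclN
          exact ⟨B, hBN.trans hNsub, hBcard, hBind⟩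
        · have key : τ ^ (k + 1) + (τ + 1) ^ k ≤ (τ + 1) ^ (k + 1) := by
            have h1 : τ ^ k ≤ (τ + 1) ^ k := Nat.pow_le_pow_left (Nat.le_succ τ) k
            calc τ ^ (k + 1) + (τ + 1) ^ k = τ ^ k * τ + (τ + 1) ^ k := by ring
              _ ≤ (τ + 1) ^ k * τ + (τ + 1) ^ k := by
                  exact Nat.add_le_add_right (Nat.mul_le_mul_right τ h1) _
              _ = (τ + 1) ^ (k + 1) := by ring
          have hNbig' : N.card < τ ^ (k + 1) := by
            rw [show k + 2 - 1 = k + 1 from rfl] at hNbig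
            omega
          have hM : (τ + 1) ^ (k + 1 - 1) ≤ M.card := by
            simp only [Nat.add_sub_cancel]
            omega
          have hnclM : ¬ ∃ B ⊆ M, B.card = τ + 1 ∧ ∀ c ∈ B, ∀ c' ∈ B, c ≠ c' → r c c' := by
            rintro ⟨B, hBM, hBcard, hBcl⟩
            exact hncl ⟨B, hBM.trans hMsub, hBcard, hBcl⟩
          obtain ⟨B, hBM, hBcard, hBind⟩ := ihδ (τ + 1) M hM hnclM
          have hxB : x ∉ B := fun hxB => (Finset.mem_erase.mp
            (Finset.mem_of_mem_filter _ (hBM hxB))).1 rfl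
          refine ⟨insert x B, Finset.insert_subset hx (hBM.trans hMsub), ?_, ?_⟩
          · rw [Finset.card_insert_of_notMem hxB, hBcard]
          · intro c hc c' hc' hne
            rcases Finset.mem_insert.mp hc with hcx | hcB
            · rcases Finset.mem_insert.mp hc' with hcx' | hcB'
              · exact absurd (hcx.trans hcx'.symm) hne
              · rw [hcx]; exact (Finset.mem_filter.mp (hBM hcB')).2
            · rcases Finset.mem_insert.mp hc' with hcx' | hcB'
              · rw [hcx']
                intro hr
                exact (Finset.mem_filter.mp (hBM hcB)).2 (hsymm _ _ hr)
              · exact hBind c hcB c' hcB' hne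

lemma walk_up (T : SimpleGraph α) (s : Set α) :
    ∀ {a b : α} (p : T.Walk a b) (ha : a ∈ s) (hb : b ∈ s),
      (∀ x ∈ p.support, x ∈ s) →
      ∃ q : (T.induce s).Walk ⟨a, ha⟩ ⟨b, hb⟩, q.length = p.length := by
  intro a b p
  induction p with
  | nil => intro ha hb _; exact ⟨SimpleGraph.Walk.nil, rfl⟩
  | cons had p ih =>
    rename_i x y z
    intro ha hb hsup
    have hy : y ∈ s := hsup y (by simp)
    obtain ⟨q, hq⟩ := ih hy hb (fun w hw => hsup w (by simp [hw]))
    have had' : (T.induce s).Adj ⟨x, ha⟩ ⟨y, hy⟩ := by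
      rw [SimpleGraph.comap_adj]
      exact had
    exact ⟨SimpleGraph.Walk.cons had' q, by simp [hq]⟩

/-- The obvious hom from an induced subgraph to the ambient graph. -/
def down (T : SimpleGraph α) (s : Set α) : T.induce s →g T where
  toFun := Subtype.val
  map_rel' := fun h => h

lemma down_injective (T : SimpleGraph α) (s : Set α) :
    Function.Injective (down T s) := fun _ _ h => Subtype.ext h

lemma main [Fintype α] {T G : SimpleGraph α} {u : α} {δ τ ρ Δ : ℕ}
    (hT : T.IsTree) (hsub : T ≤ G)
    (hminor : ¬ HasMinor (completeGraph (Fin (τ + 1))) G)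
    (hreg : RootedRegular T u Δ ρ) (hΔ : τ ^ (δ - 1) ≤ Δ) :
    ∀ ρ' v, T.dist u v + ρ' ≤ ρ →
      ∃ s : Set α, v ∈ s ∧
        (∀ w ∈ s, Anc T u v w ∧ T.dist v w ≤ ρ') ∧
        (∀ w ∈ s, ∀ x, Anc T u v x → Anc T u x w → x ∈ s) ∧
        (∀ w ∈ s, T.dist v w < ρ' → {x | x ∈ s ∧ IsChild T u w x}.ncard = δ) ∧
        (∀ w ∈ s, ∀ w' ∈ s, G.Adj w w' → Anc T u w w' ∨ Anc T u w' w) := by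
  have conn := hT.isConnected
  intro ρ'
  induction ρ' with
  | zero =>
    intro v _
    refine ⟨{v}, rfl, ?_, ?_, ?_, ?_⟩
    · intro w hw
      rw [Set.mem_singleton_iff] at hw
      subst hw
      exact ⟨anc_refl w, by simp [SimpleGraph.dist_self]⟩
    · intro w hw x h1 h2
      rw [Set.mem_singleton_iff] at hw ⊢
      subst hw
      exact (anc_antisymm hT h1 h2).symm
    · intro w _ hlt
      exact absurd hlt (Nat.not_lt_zero _)
    · intro w hw w' hw' hadj
      rw [Set.mem_singleton_iff] at hw hw'
      subst hw; subst hw'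
      exact absurd hadj (G.loopless.irrefl _)
  | succ ρ' ih =>
    intro v hv
    have hvρ : T.dist u v < ρ := by omega
    have hC := hreg.2.2 v hvρ
    have hCfin : {w | IsChild T u v w}.Finite := Set.toFinite _
    have hCF : hCfin.toFinset.card = Δ := by
      rw [← Set.ncard_eq_toFinset_card _ hCfin, hC]
    have hncl : ¬ ∃ B ⊆ hCfin.toFinset, B.card = τ ∧ ∀ c ∈ B, ∀ c' ∈ B, c ≠ c' →
        (∃ a b, Anc T u c a ∧ Anc T u c' b ∧ G.Adj a b) := by
      rintro ⟨B, hBs, hBc, hBt⟩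
      refine noCliqueChildren hT hsub hminor (v := v) ⟨B, ?_, hBc, hBt⟩
      intro c hc
      have := hBs hc
      rwa [Set.Finite.mem_toFinset] at this
    obtain ⟨B, hBsub, hBcard, hBind⟩ :=
      ramsey (fun c c' => ∃ a b, Anc T u c a ∧ Anc T u c' b ∧ G.Adj a b)
        (fun a b ⟨x, y, h1, h2, h3⟩ => ⟨y, x, h2, h1, h3.symm⟩) δ τ hCfin.toFinset
        (by rw [hCF]; exact hΔ) hncl
    have hBchild : ∀ c ∈ B, IsChild T u v c := by
      intro c hc
      have := hBsub hc
      rwa [Set.Finite.mem_toFinset] at this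
    choose F hF using fun c (hc : c ∈ B) => ih c (by rw [(hBchild c hc).2]; omega)
    set s : Set α := {v} ∪ ⋃ (c : α) (hc : c ∈ B), F c hc with hsdef
    have hmem : ∀ x, x ∈ s ↔ x = v ∨ ∃ (c : α) (hc : c ∈ B), x ∈ F c hc := by
      intro x
      simp [hsdef, Set.mem_union, Set.mem_iUnion]
    have hF1 : ∀ c hc, c ∈ F c hc := fun c hc => (hF c hc).1
    have hF2 : ∀ c hc, ∀ w ∈ F c hc, Anc T u c w ∧ T.dist c w ≤ ρ' :=
      fun c hc => (hF c hc).2.1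
    have hF3 : ∀ c hc, ∀ w ∈ F c hc, ∀ x, Anc T u c x → Anc T u x w → x ∈ F c hc :=
      fun c hc => (hF c hc).2.2.1
    have hF4 : ∀ c hc, ∀ w ∈ F c hc, T.dist c w < ρ' →
        {x | x ∈ F c hc ∧ IsChild T u w x}.ncard = δ := fun c hc => (hF c hc).2.2.2.1
    have hF5 : ∀ c hc, ∀ w ∈ F c hc, ∀ w' ∈ F c hc, G.Adj w w' →
        Anc T u w w' ∨ Anc T u w' w := fun c hc => (hF c hc).2.2.2.2
    have hAncvc : ∀ c ∈ B, Anc T u v c ∧ T.dist v c = 1 :=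
      fun c hc => child_anc hT (hBchild c hc)
    have hAncvw : ∀ c (hc : c ∈ B), ∀ w ∈ F c hc,
        Anc T u v w ∧ T.dist v w = 1 + T.dist c w := by
      intro c hc w hw
      have h1 := (hAncvc c hc).1
      have h2 := (hF2 c hc w hw).1
      have h3 := anc_dist hT h1 h2
      have h4 := (hAncvc c hc).2
      exact ⟨h3.1, by omega⟩
    have hvnot : ∀ c hc, v ∉ F c hc := by
      intro c hc hvF
      have h1 := (hF2 c hc v hvF).1
      have hch := (hBchild c hc).2
      unfold Anc at h1
      omega
    refine ⟨s, (hmem v).mpr (Or.inl rfl), ?_, ?_, ?_, ?_⟩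
    · intro w hw
      rcases (hmem w).mp hw with rfl | ⟨c, hc, hwF⟩
      · exact ⟨anc_refl w, by simp [SimpleGraph.dist_self]⟩
      · obtain ⟨ha, hd⟩ := hAncvw c hc w hwF
        have := (hF2 c hc w hwF).2
        exact ⟨ha, by omega⟩
    · intro w hw x hvx hxw
      rcases (hmem w).mp hw with rfl | ⟨c, hc, hwF⟩
      · exact (hmem x).mpr (Or.inl (anc_antisymm hT hvx hxw).symm)
      · by_cases hxv : x = v
        · exact (hmem x).mpr (Or.inl hxv)
        · obtain ⟨c'', hc''child, hc''x⟩ := anc_step hT hvx hxv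
          have hcw := (hF2 c hc w hwF).1
          have hcc : c'' = c := subtree_disjoint hT hc''child (hBchild c hc)
            (anc_dist hT hc''x hxw).1 hcw
          subst hcc
          exact (hmem x).mpr (Or.inr ⟨c'', hc, hF3 c'' hc w hwF x hc''x hxw⟩)
    · intro w hw hlt
      rcases (hmem w).mp hw with rfl | ⟨c, hc, hwF⟩
      · have hset : {x | x ∈ s ∧ IsChild T u w x} = ↑B := by
          ext x
          simp only [Set.mem_setOf_eq, Finset.coe_sort_coe, Finset.mem_coe]
          constructor
          · rintro ⟨hxs, hxchild⟩
            rcases (hmem x).mp hxs with rfl | ⟨c, hc, hxF⟩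
            · exfalso
              have := hxchild.2
              omega
            · have h1 := (hF2 c hc x hxF).1
              have : c = x := subtree_disjoint hT (hBchild c hc) hxchild h1 (anc_refl x)
              subst this
              exact hc
          · intro hxB
            exact ⟨(hmem x).mpr (Or.inr ⟨x, hxB, hF1 x hxB⟩), hBchild x hxB⟩
        rw [hset, Set.ncard_coe_finset, hBcard]
      · have hwv : w ≠ v := fun h => hvnot c hc (h ▸ hwF)
        have hdvw := (hAncvw c hc w hwF).2
        have hltc : T.dist c w < ρ' := by omega
        have hcnt := hF4 c hc w hwF hltc
        have hset : {x | x ∈ s ∧ IsChild T u w x} = {x | x ∈ F c hc ∧ IsChild T u w x} := by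
          ext x
          simp only [Set.mem_setOf_eq]
          constructor
          · rintro ⟨hxs, hxch⟩
            refine ⟨?_, hxch⟩
            rcases (hmem x).mp hxs with rfl | ⟨c', hc', hxF⟩
            · exfalso
              have h1 := (hAncvw c hc w hwF).1
              have h2 := hxch.2
              unfold Anc at h1
              omega
            · have hcx : Anc T u c x :=
                (anc_dist hT (hF2 c hc w hwF).1 (child_anc hT hxch).1).1
              have hcx' : Anc T u c' x := (hF2 c' hc' x hxF).1
              have : c' = c := subtree_disjoint hT (hBchild c' hc') (hBchild c hc) hcx' hcx
              subst this
              exact hxF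
          · rintro ⟨hxF, hxch⟩
            exact ⟨(hmem x).mpr (Or.inr ⟨c, hc, hxF⟩), hxch⟩
        rw [hset]
        exact hcnt
    · intro w hw w' hw' hadj
      rcases (hmem w).mp hw with rfl | ⟨c, hc, hwF⟩
      · rcases (hmem w').mp hw' with rfl | ⟨c', hc', hw'F⟩
        · exact absurd hadj (G.loopless.irrefl _)
        · exact Or.inl (hAncvw c' hc' w' hw'F).1
      · rcases (hmem w').mp hw' with rfl | ⟨c', hc', hw'F⟩
        · exact Or.inr (hAncvw c hc w hwF).1
        · by_cases hcc : c = c'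
          · subst hcc
            exact hF5 c hc w hwF w' hw'F hadj
          · exact absurd ⟨w, w', (hF2 c hc w hwF).1, (hF2 c' hc' w' hw'F).1, hadj⟩
              (hBind c hc c' hc' hcc)

end Statement11

end Statement11Aux


/-- If `G` has no minor isomorphic to `K_{τ+1}` and `T ≤ G` is a
`(Δ, ρ)`-regular rooted tree with `Δ ≥ τ^{δ−1}`, then some `(δ, ρ)`-regular rooted
subtree of `(T, u)` (with the same root) is branch-induced in `G`. -/
theorem statement11 {α : Type} [Fintype α] (δ τ : ℕ) (hδ : 1 ≤ δ) (hτ : 1 ≤ τ) (ρ : ℕ)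
    (G T : SimpleGraph α) (u : α)
    (hminor : ¬ HasMinor (SimpleGraph.completeGraph (Fin (τ + 1))) G)
    (Δ : ℕ) (hΔ1 : 1 ≤ Δ) (hΔ : τ ^ (δ - 1) ≤ Δ) (hsub : T ≤ G)
    (hreg : RootedRegular T u Δ ρ) :
    ∃ (s : Set α) (hu : u ∈ s),
      IsRootedSubtree T u s ⟨u, hu⟩ ∧
      RootedRegular (T.induce s) ⟨u, hu⟩ δ ρ ∧
      BranchInduced G (fun v : ↥s => (v : α)) (T.induce s) ⟨u, hu⟩ := by
  classical
  have hT : T.IsTree := hreg.1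
  obtain ⟨s, hvs, h2, h3, h4, h5⟩ :=
    Statement11.main hT hsub hminor hreg hΔ ρ u (by simp [SimpleGraph.dist_self])
  have hclo : ∀ w ∈ s, ∀ x, Anc T u x w → x ∈ s :=
    fun w hw x hx => h3 w hw x (Statement11.anc_root x) hx
  have conn := hT.isConnected
  have hup : ∀ (a : α) (ha : a ∈ s) (b : α) (hb : b ∈ s), Anc T u a b →
      ∃ q : (T.induce s).Walk ⟨a, ha⟩ ⟨b, hb⟩, q.length = T.dist a b := by
    intro a ha b hb hab
    obtain ⟨p, hp, hl⟩ := Statement11.exists_path_dist hT a b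
    have hsup : ∀ x ∈ p.support, x ∈ s := by
      intro x hx
      have d := Statement11.dist_split hT hp hx
      have t1 : T.dist u x ≤ T.dist u a + T.dist a x := conn.dist_triangle
      have t2 : T.dist u b ≤ T.dist u x + T.dist x b := conn.dist_triangle
      refine hclo b hb x ?_
      unfold Anc at hab ⊢
      omega
    obtain ⟨q, hq⟩ := Statement11.walk_up T s p ha hb hsup
    exact ⟨q, by rw [hq, hl]⟩
  have hdind : ∀ a b : ↥s, Anc T u ↑a ↑b →
      (T.induce s).dist a b = T.dist ↑a ↑b := by
    intro a b h
    obtain ⟨q, hq⟩ := hup ↑a a.2 ↑b b.2 h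
    refine le_antisymm (by rw [← hq]; exact SimpleGraph.dist_le q) ?_
    obtain ⟨q0, hq0⟩ := SimpleGraph.Reachable.exists_walk_length_eq_dist ⟨q⟩
    have := SimpleGraph.dist_le (q0.map (Statement11.down T s))
    rwa [SimpleGraph.Walk.length_map, hq0] at this
  have hdru : ∀ a : ↥s, (T.induce s).dist ⟨u, hvs⟩ a = T.dist u ↑a :=
    fun a => hdind ⟨u, hvs⟩ a (Statement11.anc_root _)
  have hreach : ∀ a b : ↥s, Anc T u ↑a ↑b → (T.induce s).Reachable a b :=
    fun a b h => ⟨(hup ↑a a.2 ↑b b.2 h).choose⟩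
  have hpre : (T.induce s).Preconnected := fun a b =>
    ((hreach ⟨u, hvs⟩ a (Statement11.anc_root _)).symm.trans
      (hreach ⟨u, hvs⟩ b (Statement11.anc_root _)))
  have htree' : (T.induce s).IsTree := by
    rw [SimpleGraph.isTree_iff_existsUnique_path]
    refine ⟨⟨⟨u, hvs⟩⟩, fun a b => ?_⟩
    obtain ⟨p0⟩ := hpre a b
    refine ⟨p0.bypass, p0.bypass_isPath, fun q hq => ?_⟩
    apply SimpleGraph.Walk.map_injective_of_injective (Statement11.down_injective T s) a b
    exact (hT.existsUnique_path ↑a ↑b).unique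
      (SimpleGraph.Walk.map_isPath_of_injective (Statement11.down_injective T s) hq)
      (SimpleGraph.Walk.map_isPath_of_injective (Statement11.down_injective T s)
        p0.bypass_isPath)
  have hchild : ∀ a b : ↥s, IsChild (T.induce s) ⟨u, hvs⟩ a b ↔ IsChild T u ↑a ↑b := by
    intro a b
    unfold IsChild
    rw [hdru a, hdru b]
    constructor <;> rintro ⟨ha1, ha2⟩ <;> exact ⟨ha1, ha2⟩
  refine ⟨s, hvs, ⟨htree', fun a b h => (hchild a b).mp h⟩, ⟨htree', ?_, ?_⟩, ?_⟩
  · intro a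
    rw [hdru a]
    exact (h2 ↑a a.2).2
  · intro a ha'
    rw [hdru a] at ha'
    have hcnt := h4 ↑a a.2 ha'
    have himg : Subtype.val '' {w : ↥s | IsChild (T.induce s) ⟨u, hvs⟩ a w} =
        {x | x ∈ s ∧ IsChild T u ↑a x} := by
      ext y
      simp only [Set.mem_image, Set.mem_setOf_eq]
      constructor
      · rintro ⟨w, hw, rfl⟩
        exact ⟨w.2, (hchild a w).mp hw⟩
      · rintro ⟨hy, hch⟩
        exact ⟨⟨y, hy⟩, (hchild a ⟨y, hy⟩).mpr hch, rfl⟩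
    rw [← Set.ncard_image_of_injective _ Subtype.coe_injective, himg]
    exact hcnt
  · intro a b hadj _
    rcases h5 ↑a a.2 ↑b b.2 hadj with h | h
    · left
      rw [hdru a, hdru b, hdind a b h]
      exact h
    · right
      rw [hdru a, hdru b, hdind b a h]
      exact h
end
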